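/- Let (H,R) be quasitriangular, and let R_l = {R¹ f(R²) : f ∈ H*} and R_r = {f(R¹) R² : f ∈ H*}. Then R_l and R_r are finite-dimensional Hopf subalgebras of H, and the map (R_l)^{*cop} → R_r, p ↦ p(R¹)R², is an isomorphism of Hopf algebras. -/

import Mathlib

set_option maxHeartbeats 1000000
set_option synthInstance.maxHeartbeats 400000


open scoped TensorProduct

structure QuasiTriangular (k H : Type*) [CommRing k] [Ring H] [HopfAlgebra k H] where
  R : H ⊗[k] H
  Sinv : H →ₗ[k] H
  Sinv_antipode : ∀ h : H, Sinv (HopfAlgebra.antipode (R := k) h) = h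
  antipode_Sinv : ∀ h : H, HopfAlgebra.antipode (R := k) (Sinv h) = h
  comul_fst : (TensorProduct.assoc k H H H)
      ((TensorProduct.map (Coalgebra.comul (R := k)) LinearMap.id) R)
    = (Algebra.TensorProduct.map (AlgHom.id k H) Algebra.TensorProduct.includeRight) R *
      Algebra.TensorProduct.includeRight R
  comul_snd : (TensorProduct.map LinearMap.id (Coalgebra.comul (R := k))) R
    = (Algebra.TensorProduct.map (AlgHom.id k H) Algebra.TensorProduct.includeRight) R *
      (Algebra.TensorProduct.map (AlgHom.id k H) Algebra.TensorProduct.includeLeft) R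
  counit_fst : (TensorProduct.lid k H)
      ((TensorProduct.map (Coalgebra.counit (R := k)) LinearMap.id) R) = 1
  counit_snd : (TensorProduct.rid k H)
      ((TensorProduct.map LinearMap.id (Coalgebra.counit (R := k))) R) = 1
  intertwine : ∀ h : H, (TensorProduct.comm k H H) (Coalgebra.comul (R := k) h) * R
    = R * Coalgebra.comul (R := k) h

variable (k H : Type*) [CommRing k] [Ring H] [HopfAlgebra k H]

/-- `θ f = f(R¹) R²`. -/
noncomputable def qtTheta (Q : QuasiTriangular k H) (f : Module.Dual k H) : H :=
  (TensorProduct.lid k H) ((TensorProduct.map f LinearMap.id) Q.R)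

/-- `θ' f = R¹ f(R²)`. -/
noncomputable def qtThetaL (Q : QuasiTriangular k H) (f : Module.Dual k H) : H :=
  (TensorProduct.rid k H) ((TensorProduct.map LinearMap.id f) Q.R)

/-- `R_l = {R¹ f(R²) : f ∈ H*}`. -/
noncomputable def Rl (Q : QuasiTriangular k H) : Submodule k H :=
  Submodule.span k {x | ∃ f : Module.Dual k H, x = qtThetaL k H Q f}

/-- `R_r = {f(R¹) R² : f ∈ H*}`. -/
noncomputable def Rr (Q : QuasiTriangular k H) : Submodule k H :=
  Submodule.span k {x | ∃ f : Module.Dual k H, x = qtTheta k H Q f}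

/-- Convolution product of two elements of `H*`. -/
noncomputable def qtConv (f g : Module.Dual k H) : Module.Dual k H :=
  (TensorProduct.lid k k).toLinearMap ∘ₗ (TensorProduct.map f g) ∘ₗ Coalgebra.comul (R := k)

/-- A subspace of a Hopf algebra which is a Hopf subalgebra. -/
def IsHopfSubalgebra (S : Submodule k H) : Prop :=
  (1 : H) ∈ S ∧ (∀ x ∈ S, ∀ y ∈ S, x * y ∈ S) ∧
  (∀ x ∈ S, Coalgebra.comul (R := k) x ∈ LinearMap.range (TensorProduct.map S.subtype S.subtype)) ∧
  (∀ x ∈ S, HopfAlgebra.antipode (R := k) x ∈ S)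


section AntipodeFacts

open TensorProduct Coalgebra HopfAlgebra

variable {k H : Type*} [CommRing k] [Ring H] [HopfAlgebra k H]

/-- A representation of `comul (a*b)` built from representations of `comul a`, `comul b`. -/
noncomputable def mulRepr {ι κ : Type*} {a b : H} (ra : Coalgebra.Repr k a ι)
    (rb : Coalgebra.Repr k b κ) :
    Coalgebra.Repr k (a * b) (ι × κ) where
  index := ra.index ×ˢ rb.index
  left := fun p => ra.left p.1 * rb.left p.2
  right := fun p => ra.right p.1 * rb.right p.2
  eq := by
    rw [Finset.sum_product]
    rw [Bialgebra.comul_mul (R := k), ← ra.eq, ← rb.eq, Finset.sum_mul_sum]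
    simp [Algebra.TensorProduct.tmul_mul_tmul]

lemma antipode_one' : antipode (R := k) (1 : H) = 1 := by
  have := mul_antipode_rTensor_comul_apply (R := k) (A := H) 1
  simpa [Bialgebra.comul_one, Algebra.TensorProduct.one_def] using this

lemma sum_counit_smul_right {ι : Type*} {a : H} (r : Coalgebra.Repr k a ι) :
    ∑ i ∈ r.index, counit (R := k) (r.left i) • r.right i = a := by
  have := Coalgebra.sum_counit_tmul_eq (R := k) r
  apply_fun (TensorProduct.lid k H) at this
  simpa [map_sum, -Coalgebra.sum_counit_tmul_eq, -Coalgebra.sum_tmul_counit_eq] using this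

lemma sum_smul_counit_left {ι : Type*} {a : H} (r : Coalgebra.Repr k a ι) :
    ∑ i ∈ r.index, counit (R := k) (r.right i) • r.left i = a := by
  have := Coalgebra.sum_tmul_counit_eq (R := k) r
  apply_fun (TensorProduct.rid k H) at this
  simpa [map_sum, -Coalgebra.sum_counit_tmul_eq, -Coalgebra.sum_tmul_counit_eq] using this

lemma sum_antipode_mul_eq_smul' {ι : Type*} {a : H} (r : Coalgebra.Repr k a ι) :
    ∑ i ∈ r.index, antipode (R := k) (r.left i) * r.right i = counit (R := k) a • (1 : H) :=
  sum_antipode_mul_eq_smul r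

lemma antipode_mul_aux {α β : Type*} {α₁ α₂ : α → Type*} {β₁ β₂ : β → Type*}
    (a b : H) (ra : Coalgebra.Repr k a α) (rb : Coalgebra.Repr k b β)
    (ra₁ : ∀ i : ra.ι, Coalgebra.Repr k (ra.left i) (α₁ i))
    (ra₂ : ∀ i : ra.ι, Coalgebra.Repr k (ra.right i) (α₂ i))
    (rb₁ : ∀ j : rb.ι, Coalgebra.Repr k (rb.left j) (β₁ j))
    (rb₂ : ∀ j : rb.ι, Coalgebra.Repr k (rb.right j) (β₂ j)) :
    antipode (R := k) (a * b) = antipode (R := k) b * antipode (R := k) a := by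
  classical
  set S : H →ₗ[k] H := antipode (R := k) with hSdef
  set mu : H ⊗[k] H →ₗ[k] H := LinearMap.mul' k H with hmu
  set β : (H ⊗[k] (H ⊗[k] H)) ⊗[k] (H ⊗[k] (H ⊗[k] H)) →ₗ[k] H ⊗[k] (H ⊗[k] H) :=
    (TensorProduct.map mu LinearMap.id)
      ∘ₗ (TensorProduct.assoc k H H (H ⊗[k] H)).symm.toLinearMap
      ∘ₗ (TensorProduct.map (S ∘ₗ mu)
          ((TensorProduct.map mu LinearMap.id) ∘ₗ (tensorTensorTensorComm k H H H H).toLinearMap))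
      ∘ₗ (tensorTensorTensorComm k H (H ⊗[k] H) H (H ⊗[k] H)).toLinearMap with hβdef
  have hβ : ∀ p q r p' q' r' : H, β ((p ⊗ₜ[k] (q ⊗ₜ[k] r)) ⊗ₜ[k] (p' ⊗ₜ[k] (q' ⊗ₜ[k] r'))) =
      (S (p * p') * (q * q')) ⊗ₜ[k] (r ⊗ₜ[k] r') := by
    intros p q r p' q' r'
    simp [hβdef, hmu]
  set γ : H ⊗[k] (H ⊗[k] H) →ₗ[k] H :=
    mu ∘ₗ (TensorProduct.map LinearMap.id
      (mu ∘ₗ (TensorProduct.map S S) ∘ₗ (TensorProduct.comm k H H).toLinearMap)) with hγdef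
  have hγ : ∀ w y z : H, γ (w ⊗ₜ[k] (y ⊗ₜ[k] z)) = w * (S z * S y) := by
    intros; simp [hγdef, hmu]
  have κa := Coalgebra.sum_tmul_tmul_eq (R := k) ra ra₁ ra₂
  have κb := Coalgebra.sum_tmul_tmul_eq (R := k) rb rb₁ rb₂
  have key : γ (β ((∑ i ∈ ra.index, ∑ t ∈ (ra₁ i).index,
        (ra₁ i).left t ⊗ₜ[k] ((ra₁ i).right t ⊗ₜ[k] ra.right i)) ⊗ₜ[k]
      (∑ j ∈ rb.index, ∑ u ∈ (rb₁ j).index,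
        (rb₁ j).left u ⊗ₜ[k] ((rb₁ j).right u ⊗ₜ[k] rb.right j)))) =
      γ (β ((∑ i ∈ ra.index, ∑ t ∈ (ra₂ i).index,
        ra.left i ⊗ₜ[k] ((ra₂ i).left t ⊗ₜ[k] (ra₂ i).right t)) ⊗ₜ[k]
      (∑ j ∈ rb.index, ∑ u ∈ (rb₂ j).index,
        rb.left j ⊗ₜ[k] ((rb₂ j).left u ⊗ₜ[k] (rb₂ j).right u)))) := by
    rw [κa, κb]
  -- sum forms of counit identities, phrased with S
  have hSb : (∑ j ∈ rb.index, counit (R := k) (rb.left j) • S (rb.right j)) = S b := by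
    have hsum := sum_counit_smul_right (k := k) rb
    calc ∑ j ∈ rb.index, counit (R := k) (rb.left j) • S (rb.right j)
        = S (∑ j ∈ rb.index, counit (R := k) (rb.left j) • rb.right j) := by
          rw [map_sum]
          exact Finset.sum_congr rfl fun j _ => (map_smul S _ _).symm
      _ = S b := by rw [hsum]
  have hSa : (∑ i ∈ ra.index, counit (R := k) (ra.left i) • S (ra.right i)) = S a := by
    have hsum := sum_counit_smul_right (k := k) ra
    calc ∑ i ∈ ra.index, counit (R := k) (ra.left i) • S (ra.right i)
        = S (∑ i ∈ ra.index, counit (R := k) (ra.left i) • ra.right i) := by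
          rw [map_sum]
          exact Finset.sum_congr rfl fun i _ => (map_smul S _ _).symm
      _ = S a := by rw [hsum]
  -- compute the left side: collapses to S b * S a
  have hY : γ (β ((∑ i ∈ ra.index, ∑ t ∈ (ra₁ i).index,
        (ra₁ i).left t ⊗ₜ[k] ((ra₁ i).right t ⊗ₜ[k] ra.right i)) ⊗ₜ[k]
      (∑ j ∈ rb.index, ∑ u ∈ (rb₁ j).index,
        (rb₁ j).left u ⊗ₜ[k] ((rb₁ j).right u ⊗ₜ[k] rb.right j)))) = S b * S a := by
    simp only [TensorProduct.sum_tmul]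
    simp only [TensorProduct.tmul_sum]
    simp only [map_sum, hβ, hγ]
    have e1 : ∀ i ∈ ra.index, ∀ j ∈ rb.index,
        ∑ t ∈ (ra₁ i).index, ∑ u ∈ (rb₁ j).index,
          S ((ra₁ i).left t * (rb₁ j).left u) * ((ra₁ i).right t * (rb₁ j).right u) *
            (S (rb.right j) * S (ra.right i))
        = (counit (R := k) (rb.left j) • S (rb.right j)) *
            (counit (R := k) (ra.left i) • S (ra.right i)) := by
      intro i _ j _
      have hh := sum_antipode_mul_eq_smul (R := k) (mulRepr (ra₁ i) (rb₁ j))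
      simp only [mulRepr] at hh
      rw [Finset.sum_product] at hh
      rw [← hSdef] at hh
      calc ∑ t ∈ (ra₁ i).index, ∑ u ∈ (rb₁ j).index,
            S ((ra₁ i).left t * (rb₁ j).left u) * ((ra₁ i).right t * (rb₁ j).right u) *
              (S (rb.right j) * S (ra.right i))
          = (∑ t ∈ (ra₁ i).index, ∑ u ∈ (rb₁ j).index,
              S ((ra₁ i).left t * (rb₁ j).left u) * ((ra₁ i).right t * (rb₁ j).right u)) *
              (S (rb.right j) * S (ra.right i)) := by
            rw [Finset.sum_mul]
            exact Finset.sum_congr rfl fun t _ => by rw [Finset.sum_mul]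
        _ = (counit (R := k) (ra.left i * rb.left j) • (1 : H)) *
              (S (rb.right j) * S (ra.right i)) := by rw [hh]
        _ = (counit (R := k) (rb.left j) • S (rb.right j)) *
              (counit (R := k) (ra.left i) • S (ra.right i)) := by
            rw [Bialgebra.counit_mul]
            rw [smul_mul_assoc, one_mul, smul_mul_assoc, mul_smul_comm, mul_comm
              (counit (R := k) (ra.left i)) (counit (R := k) (rb.left j)), mul_smul]
    calc ∑ i ∈ ra.index, ∑ t ∈ (ra₁ i).index, ∑ j ∈ rb.index, ∑ u ∈ (rb₁ j).index,
          S ((ra₁ i).left t * (rb₁ j).left u) * ((ra₁ i).right t * (rb₁ j).right u) *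
            (S (rb.right j) * S (ra.right i))
        = ∑ i ∈ ra.index, ∑ j ∈ rb.index, ∑ t ∈ (ra₁ i).index, ∑ u ∈ (rb₁ j).index,
          S ((ra₁ i).left t * (rb₁ j).left u) * ((ra₁ i).right t * (rb₁ j).right u) *
            (S (rb.right j) * S (ra.right i)) :=
          Finset.sum_congr rfl fun i _ => Finset.sum_comm
      _ = ∑ i ∈ ra.index, ∑ j ∈ rb.index,
            (counit (R := k) (rb.left j) • S (rb.right j)) *
            (counit (R := k) (ra.left i) • S (ra.right i)) :=
          Finset.sum_congr rfl fun i hi => Finset.sum_congr rfl fun j hj => e1 i hi j hj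
      _ = ∑ i ∈ ra.index,
            (∑ j ∈ rb.index, counit (R := k) (rb.left j) • S (rb.right j)) *
            (counit (R := k) (ra.left i) • S (ra.right i)) :=
          Finset.sum_congr rfl fun i _ => (Finset.sum_mul _ _ _).symm
      _ = (∑ j ∈ rb.index, counit (R := k) (rb.left j) • S (rb.right j)) *
            (∑ i ∈ ra.index, counit (R := k) (ra.left i) • S (ra.right i)) :=
          (Finset.mul_sum _ _ _).symm
      _ = S b * S a := by rw [hSb, hSa]
  -- compute the right side: collapses to S (a * b)
  have hX : γ (β ((∑ i ∈ ra.index, ∑ t ∈ (ra₂ i).index,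
        ra.left i ⊗ₜ[k] ((ra₂ i).left t ⊗ₜ[k] (ra₂ i).right t)) ⊗ₜ[k]
      (∑ j ∈ rb.index, ∑ u ∈ (rb₂ j).index,
        rb.left j ⊗ₜ[k] ((rb₂ j).left u ⊗ₜ[k] (rb₂ j).right u)))) = S (a * b) := by
    simp only [TensorProduct.sum_tmul]
    simp only [TensorProduct.tmul_sum]
    simp only [map_sum, hβ, hγ]
    have e2 : ∀ (i : ra.ι) (j : rb.ι) (t : (ra₂ i).ι),
        ∑ u ∈ (rb₂ j).index,
          S (ra.left i * rb.left j) * ((ra₂ i).left t * (rb₂ j).left u) *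
            (S ((rb₂ j).right u) * S ((ra₂ i).right t))
        = counit (R := k) (rb.right j) •
            (S (ra.left i * rb.left j) * (ra₂ i).left t * S ((ra₂ i).right t)) := by
      intro i j t
      have hh := sum_mul_antipode_eq_smul (R := k) (rb₂ j)
      rw [← hSdef] at hh
      calc ∑ u ∈ (rb₂ j).index,
            S (ra.left i * rb.left j) * ((ra₂ i).left t * (rb₂ j).left u) *
              (S ((rb₂ j).right u) * S ((ra₂ i).right t))
          = ∑ u ∈ (rb₂ j).index,
            S (ra.left i * rb.left j) * (ra₂ i).left t *
              ((rb₂ j).left u * S ((rb₂ j).right u)) * S ((ra₂ i).right t) :=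
            Finset.sum_congr rfl fun u _ => by simp only [mul_assoc]
        _ = S (ra.left i * rb.left j) * (ra₂ i).left t *
              (∑ u ∈ (rb₂ j).index, (rb₂ j).left u * S ((rb₂ j).right u)) *
              S ((ra₂ i).right t) := by
            rw [← Finset.sum_mul, ← Finset.mul_sum]
        _ = counit (R := k) (rb.right j) •
              (S (ra.left i * rb.left j) * (ra₂ i).left t * S ((ra₂ i).right t)) := by
            rw [hh]
            rw [mul_smul_comm, smul_mul_assoc, mul_one]
    have e3 : ∀ (i : ra.ι) (t : (ra₂ i).ι),
        ∑ j ∈ rb.index, counit (R := k) (rb.right j) •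
            (S (ra.left i * rb.left j) * (ra₂ i).left t * S ((ra₂ i).right t))
        = S (ra.left i * b) * (ra₂ i).left t * S ((ra₂ i).right t) := by
      intro i t
      have hsum := sum_smul_counit_left (k := k) rb
      calc ∑ j ∈ rb.index, counit (R := k) (rb.right j) •
              (S (ra.left i * rb.left j) * (ra₂ i).left t * S ((ra₂ i).right t))
          = (∑ j ∈ rb.index, counit (R := k) (rb.right j) • S (ra.left i * rb.left j)) *
              (ra₂ i).left t * S ((ra₂ i).right t) := by
            rw [Finset.sum_mul, Finset.sum_mul]
            exact Finset.sum_congr rfl fun j _ => by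
              rw [smul_mul_assoc, smul_mul_assoc]
        _ = S (ra.left i * b) * (ra₂ i).left t * S ((ra₂ i).right t) := by
            congr 2
            calc ∑ j ∈ rb.index, counit (R := k) (rb.right j) • S (ra.left i * rb.left j)
                = S (ra.left i * ∑ j ∈ rb.index, counit (R := k) (rb.right j) • rb.left j) := by
                  rw [Finset.mul_sum, map_sum]
                  exact Finset.sum_congr rfl fun j _ => by
                    rw [mul_smul_comm, map_smul]
              _ = S (ra.left i * b) := by rw [hsum]
    have e4 : ∀ i : ra.ι,
        ∑ t ∈ (ra₂ i).index, S (ra.left i * b) * (ra₂ i).left t * S ((ra₂ i).right t)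
        = counit (R := k) (ra.right i) • S (ra.left i * b) := by
      intro i
      have hh := sum_mul_antipode_eq_smul (R := k) (ra₂ i)
      rw [← hSdef] at hh
      calc ∑ t ∈ (ra₂ i).index, S (ra.left i * b) * (ra₂ i).left t * S ((ra₂ i).right t)
          = S (ra.left i * b) * ∑ t ∈ (ra₂ i).index, (ra₂ i).left t * S ((ra₂ i).right t) := by
            rw [Finset.mul_sum]
            exact Finset.sum_congr rfl fun t _ => by rw [mul_assoc]
        _ = counit (R := k) (ra.right i) • S (ra.left i * b) := by
            rw [hh, mul_smul_comm, mul_one]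
    calc ∑ i ∈ ra.index, ∑ t ∈ (ra₂ i).index, ∑ j ∈ rb.index, ∑ u ∈ (rb₂ j).index,
          S (ra.left i * rb.left j) * ((ra₂ i).left t * (rb₂ j).left u) *
            (S ((rb₂ j).right u) * S ((ra₂ i).right t))
        = ∑ i ∈ ra.index, ∑ t ∈ (ra₂ i).index,
            S (ra.left i * b) * (ra₂ i).left t * S ((ra₂ i).right t) := by
          refine Finset.sum_congr rfl fun i _ => Finset.sum_congr rfl fun t _ => ?_
          rw [show (∑ j ∈ rb.index, ∑ u ∈ (rb₂ j).index,
              S (ra.left i * rb.left j) * ((ra₂ i).left t * (rb₂ j).left u) *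
                (S ((rb₂ j).right u) * S ((ra₂ i).right t)))
            = ∑ j ∈ rb.index, counit (R := k) (rb.right j) •
                (S (ra.left i * rb.left j) * (ra₂ i).left t * S ((ra₂ i).right t)) from
            Finset.sum_congr rfl fun j _ => e2 i j t]
          exact e3 i t
      _ = ∑ i ∈ ra.index, counit (R := k) (ra.right i) • S (ra.left i * b) :=
          Finset.sum_congr rfl fun i _ => e4 i
      _ = S (a * b) := by
          have hsum := sum_smul_counit_left (k := k) ra
          calc ∑ i ∈ ra.index, counit (R := k) (ra.right i) • S (ra.left i * b)
              = S ((∑ i ∈ ra.index, counit (R := k) (ra.right i) • ra.left i) * b) := by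
                rw [Finset.sum_mul, map_sum]
                exact Finset.sum_congr rfl fun i _ => by rw [smul_mul_assoc, map_smul]
            _ = S (a * b) := by rw [hsum]
  calc S (a * b) = _ := hX.symm
    _ = _ := key.symm
    _ = S b * S a := hY


lemma antipode_mul' (a b : H) :
    antipode (R := k) (a * b) = antipode (R := k) b * antipode (R := k) a :=
  antipode_mul_aux a b (ℛ k a) (ℛ k b) (fun _ => ℛ k _) (fun _ => ℛ k _)
    (fun _ => ℛ k _) (fun _ => ℛ k _)

section Sinv

variable (T : H →ₗ[k] H) (hTS : ∀ h : H, T (antipode (R := k) h) = h)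
  (hST : ∀ h : H, antipode (R := k) (T h) = h)

include hTS in
lemma sinv_one : T 1 = 1 := by
  have := hTS 1
  rwa [antipode_one'] at this

include hTS hST in
lemma sinv_mul (x y : H) : T (x * y) = T y * T x := by
  have h2 : antipode (R := k) (T y * T x) = x * y := by
    rw [antipode_mul', hST, hST]
  rw [← h2, hTS]

include hTS hST in
lemma sum_sinv_mul {ι : Type*} {a : H} (r : Coalgebra.Repr k a ι) :
    ∑ i ∈ r.index, T (r.right i) * r.left i = counit (R := k) a • (1 : H) := by
  have h := sum_antipode_mul_eq_smul (R := k) r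
  have := congrArg T h
  rw [map_sum, map_smul, sinv_one T hTS] at this
  calc ∑ i ∈ r.index, T (r.right i) * r.left i
      = ∑ i ∈ r.index, T (antipode (R := k) (r.left i) * r.right i) := by
        refine Finset.sum_congr rfl fun i _ => ?_
        rw [sinv_mul T hTS hST, hTS]
    _ = counit (R := k) a • (1 : H) := this

include hTS hST in
lemma sum_mul_sinv {ι : Type*} {a : H} (r : Coalgebra.Repr k a ι) :
    ∑ i ∈ r.index, r.right i * T (r.left i) = counit (R := k) a • (1 : H) := by
  have h := sum_mul_antipode_eq_smul (R := k) r
  have := congrArg T h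
  rw [map_sum, map_smul, sinv_one T hTS] at this
  calc ∑ i ∈ r.index, r.right i * T (r.left i)
      = ∑ i ∈ r.index, T (r.left i * antipode (R := k) (r.right i)) := by
        refine Finset.sum_congr rfl fun i _ => ?_
        rw [sinv_mul T hTS hST, hTS]
    _ = counit (R := k) a • (1 : H) := this

end Sinv

end AntipodeFacts

section QTLemmas

open TensorProduct Coalgebra HopfAlgebra

variable {k H : Type*} [Field k] [Ring H] [HopfAlgebra k H] (Q : QuasiTriangular k H)

lemma exists_dualRep (x : H ⊗[k] H) :
    ∃ (n : ℕ) (u w : Fin n → H) (c : Fin n → Module.Dual k H),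
      (∀ p q, c p (u q) = if p = q then (1 : k) else 0) ∧ x = ∑ p, u p ⊗ₜ[k] w p := by
  classical
  obtain ⟨s, hs⟩ := TensorProduct.exists_finset (R := k) x
  set V : Submodule k H := Submodule.span k (Prod.fst '' (s : Set (H × H))) with hV
  haveI : FiniteDimensional k V := FiniteDimensional.span_of_finite k ((s.finite_toSet).image _)
  set b := Module.finBasis k V with hb
  obtain ⟨W, hW⟩ := Submodule.exists_isCompl V
  set pr : H →ₗ[k] V := Submodule.linearProjOfIsCompl V W hW with hpr
  have memV : ∀ i : {y // y ∈ s}, i.1.1 ∈ V := fun i => Submodule.subset_span ⟨i.1, i.2, rfl⟩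
  refine ⟨Module.finrank k V, fun p => (b p : H),
    fun p => ∑ i ∈ s.attach, (b.repr ⟨i.1.1, memV i⟩ p) • i.1.2,
    fun p => (b.coord p) ∘ₗ pr, ?_, ?_⟩
  · intro p q
    have h1 : pr ((b q : V) : H) = b q := Submodule.linearProjOfIsCompl_apply_left hW (b q)
    simp only [LinearMap.comp_apply, h1, Module.Basis.coord_apply, Module.Basis.repr_self]
    rw [Finsupp.single_apply]
    by_cases h : p = q
    · simp [h]
    · simp [h, Ne.symm h]
  · rw [hs, ← Finset.sum_attach s (fun i => i.1 ⊗ₜ[k] i.2)]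
    have key : ∀ i : {y // y ∈ s},
        (∑ p, (b.repr ⟨i.1.1, memV i⟩ p) • ((b p : H))) = i.1.1 := by
      intro i
      have h2 := congrArg (V.subtype) (b.sum_repr ⟨i.1.1, memV i⟩)
      simpa only [map_sum, map_smul, Submodule.subtype_apply] using h2
    calc ∑ i ∈ s.attach, i.1.1 ⊗ₜ[k] i.1.2
        = ∑ i ∈ s.attach, (∑ p, (b.repr ⟨i.1.1, memV i⟩ p) • ((b p : H))) ⊗ₜ[k] i.1.2 := by
          refine Finset.sum_congr rfl fun i _ => ?_; rw [key i]
      _ = ∑ i ∈ s.attach, ∑ p, (b.repr ⟨i.1.1, memV i⟩ p) • (((b p : H)) ⊗ₜ[k] i.1.2) := by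
          refine Finset.sum_congr rfl fun i _ => ?_
          rw [TensorProduct.sum_tmul]
          exact Finset.sum_congr rfl fun p _ => by rw [TensorProduct.smul_tmul']
      _ = ∑ p, ∑ i ∈ s.attach, (b.repr ⟨i.1.1, memV i⟩ p) • (((b p : H)) ⊗ₜ[k] i.1.2) :=
          Finset.sum_comm
      _ = ∑ p, ((b p : H)) ⊗ₜ[k] ∑ i ∈ s.attach, (b.repr ⟨i.1.1, memV i⟩ p) • i.1.2 := by
          refine Finset.sum_congr rfl fun p _ => ?_
          rw [TensorProduct.tmul_sum]
          exact Finset.sum_congr rfl fun i _ => by rw [TensorProduct.tmul_smul]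

lemma theta_sum (f : Module.Dual k H) {n : ℕ} {u w : Fin n → H}
    (hR : Q.R = ∑ p, u p ⊗ₜ[k] w p) :
    qtTheta k H Q f = ∑ p, f (u p) • w p := by
  rw [qtTheta, hR]; simp

lemma thetaL_sum (f : Module.Dual k H) {n : ℕ} {u w : Fin n → H}
    (hR : Q.R = ∑ p, u p ⊗ₜ[k] w p) :
    qtThetaL k H Q f = ∑ p, f (w p) • u p := by
  rw [qtThetaL, hR]; simp

lemma theta_dual {n : ℕ} {u w : Fin n → H} {c : Fin n → Module.Dual k H}
    (hδ : ∀ p q, c p (u q) = if p = q then (1 : k) else 0)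
    (hR : Q.R = ∑ p, u p ⊗ₜ[k] w p) (p : Fin n) :
    qtTheta k H Q (c p) = w p := by
  rw [theta_sum Q (c p) hR]
  simp [hδ]

lemma counit_theta : qtTheta k H Q (Coalgebra.counit (R := k)) = 1 := Q.counit_fst

lemma counit_thetaL : qtThetaL k H Q (Coalgebra.counit (R := k)) = 1 := Q.counit_snd

lemma pairing (f g : Module.Dual k H) : f (qtThetaL k H Q g) = g (qtTheta k H Q f) := by
  obtain ⟨n, u, w, c, hδ, hR⟩ := exists_dualRep (k := k) Q.R
  rw [theta_sum Q f hR, thetaL_sum Q g hR]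
  simp [map_sum, mul_comm]

lemma conv_apply (f g : Module.Dual k H) {ι : Type*} {x : H} (r : Coalgebra.Repr k x ι) :
    qtConv k H f g x = ∑ i ∈ r.index, f (r.left i) * g (r.right i) := by
  rw [qtConv]
  simp only [LinearMap.comp_apply, LinearEquiv.coe_coe]
  rw [← r.eq]
  simp [map_sum, smul_eq_mul]

lemma thetaL_dual {m : ℕ} {z v : Fin m → H} {d : Fin m → Module.Dual k H}
    (hδ' : ∀ p q, d p (v q) = if p = q then (1 : k) else 0)
    (hR' : Q.R = ∑ p, z p ⊗ₜ[k] v p) (p : Fin m) :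
    qtThetaL k H Q (d p) = z p := by
  rw [thetaL_sum Q (d p) hR']
  simp [hδ']

lemma comul_fst_sum {n : ℕ} {u w : Fin n → H} (hR : Q.R = ∑ p, u p ⊗ₜ[k] w p) :
    (TensorProduct.assoc k H H H)
        ((TensorProduct.map (Coalgebra.comul (R := k)) LinearMap.id) Q.R)
      = ∑ p, ∑ q, u p ⊗ₜ[k] (u q ⊗ₜ[k] (w p * w q)) := by
  rw [Q.comul_fst, hR, map_sum, map_sum, Finset.sum_mul_sum]
  refine Finset.sum_congr rfl fun p _ => Finset.sum_congr rfl fun q _ => ?_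
  simp [Algebra.TensorProduct.tmul_mul_tmul]

lemma comul_snd_sum {n : ℕ} {u w : Fin n → H} (hR : Q.R = ∑ p, u p ⊗ₜ[k] w p) :
    (TensorProduct.map LinearMap.id (Coalgebra.comul (R := k))) Q.R
      = ∑ p, ∑ q, (u p * u q) ⊗ₜ[k] (w q ⊗ₜ[k] w p) := by
  rw [Q.comul_snd, hR, map_sum, map_sum, Finset.sum_mul_sum]
  refine Finset.sum_congr rfl fun p _ => Finset.sum_congr rfl fun q _ => ?_
  simp [Algebra.TensorProduct.tmul_mul_tmul]

lemma theta_mul (f g : Module.Dual k H) :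
    qtTheta k H Q (qtConv k H f g) = qtTheta k H Q f * qtTheta k H Q g := by
  classical
  obtain ⟨n, u, w, c, hδ, hR⟩ := exists_dualRep (k := k) Q.R
  set K : H ⊗[k] (H ⊗[k] H) →ₗ[k] H :=
    (TensorProduct.lid k H).toLinearMap ∘ₗ
      TensorProduct.map f ((TensorProduct.lid k H).toLinearMap ∘ₗ
        TensorProduct.map g LinearMap.id) with hK
  have hKt : ∀ x y t : H, K (x ⊗ₜ[k] (y ⊗ₜ[k] t)) = (f x * g y) • t := by
    intros; simp [hK, smul_smul, mul_comm]
  have e1 : K ((TensorProduct.assoc k H H H)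
        ((TensorProduct.map (Coalgebra.comul (R := k)) LinearMap.id) Q.R))
      = qtTheta k H Q (qtConv k H f g) := by
    rw [hR, theta_sum Q _ hR]
    simp only [map_sum]
    refine Finset.sum_congr rfl fun p _ => ?_
    rw [TensorProduct.map_tmul, LinearMap.id_apply,
      conv_apply f g (ℛ k (u p)), ← (ℛ k (u p)).eq,
      TensorProduct.sum_tmul]
    simp only [map_sum]
    rw [Finset.sum_smul]
    refine Finset.sum_congr rfl fun t _ => ?_
    rw [TensorProduct.assoc_tmul, hKt]
  have e2 : K ((TensorProduct.assoc k H H H)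
        ((TensorProduct.map (Coalgebra.comul (R := k)) LinearMap.id) Q.R))
      = qtTheta k H Q f * qtTheta k H Q g := by
    rw [comul_fst_sum Q hR, theta_sum Q f hR, theta_sum Q g hR, Finset.sum_mul_sum]
    simp only [map_sum]
    refine Finset.sum_congr rfl fun p _ => ?_
    refine Finset.sum_congr rfl fun q _ => ?_
    rw [hKt, smul_mul_assoc, mul_smul_comm, smul_smul]
  exact e1.symm.trans e2

lemma thetaL_mul (f g : Module.Dual k H) :
    qtThetaL k H Q f * qtThetaL k H Q g = qtThetaL k H Q (qtConv k H g f) := by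
  classical
  obtain ⟨n, u, w, c, hδ, hR⟩ := exists_dualRep (k := k) Q.R
  set K : H ⊗[k] (H ⊗[k] H) →ₗ[k] H :=
    (TensorProduct.lid k H).toLinearMap ∘ₗ
      TensorProduct.map ((TensorProduct.lid k k).toLinearMap ∘ₗ TensorProduct.map g f)
        LinearMap.id ∘ₗ (TensorProduct.comm k H (H ⊗[k] H)).toLinearMap with hK
  have hKt : ∀ x y t : H, K (x ⊗ₜ[k] (y ⊗ₜ[k] t)) = (g y * f t) • x := by
    intros; simp [hK, smul_smul, mul_comm]
  have e1 : K ((TensorProduct.map LinearMap.id (Coalgebra.comul (R := k))) Q.R)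
      = qtThetaL k H Q (qtConv k H g f) := by
    rw [hR, thetaL_sum Q _ hR]
    simp only [map_sum]
    refine Finset.sum_congr rfl fun p _ => ?_
    rw [TensorProduct.map_tmul, LinearMap.id_apply,
      conv_apply g f (ℛ k (w p)), ← (ℛ k (w p)).eq,
      TensorProduct.tmul_sum]
    simp only [map_sum]
    rw [Finset.sum_smul]
    refine Finset.sum_congr rfl fun t _ => ?_
    rw [hKt]
  have e2 : K ((TensorProduct.map LinearMap.id (Coalgebra.comul (R := k))) Q.R)
      = qtThetaL k H Q f * qtThetaL k H Q g := by
    rw [comul_snd_sum Q hR, thetaL_sum Q f hR, thetaL_sum Q g hR, Finset.sum_mul_sum]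
    simp only [map_sum]
    refine Finset.sum_congr rfl fun p _ => ?_
    refine Finset.sum_congr rfl fun q _ => ?_
    rw [hKt, smul_mul_assoc, mul_smul_comm, smul_smul, mul_comm (g (w q)) (f (w p))]
  exact e2.symm.trans e1

lemma comul_theta (f : Module.Dual k H) {n : ℕ} {u w : Fin n → H}
    {c : Fin n → Module.Dual k H}
    (hδ : ∀ p q, c p (u q) = if p = q then (1 : k) else 0)
    (hR : Q.R = ∑ p, u p ⊗ₜ[k] w p) :
    Coalgebra.comul (R := k) (qtTheta k H Q f)
      = ∑ p, ∑ q, f (u p * u q) • (qtTheta k H Q (c q) ⊗ₜ[k] qtTheta k H Q (c p)) := by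
  classical
  set M : H ⊗[k] (H ⊗[k] H) →ₗ[k] H ⊗[k] H :=
    (TensorProduct.lid k (H ⊗[k] H)).toLinearMap ∘ₗ TensorProduct.map f LinearMap.id with hM
  have hMt : ∀ (x : H) (t : H ⊗[k] H), M (x ⊗ₜ[k] t) = f x • t := by
    intros; simp [hM]
  have e1 : M ((TensorProduct.map LinearMap.id (Coalgebra.comul (R := k))) Q.R)
      = Coalgebra.comul (R := k) (qtTheta k H Q f) := by
    rw [hR, theta_sum Q f hR]
    simp only [map_sum, map_smul]
    refine Finset.sum_congr rfl fun p _ => ?_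
    rw [TensorProduct.map_tmul, LinearMap.id_apply, hMt]
  have e2 : M ((TensorProduct.map LinearMap.id (Coalgebra.comul (R := k))) Q.R)
      = ∑ p, ∑ q, f (u p * u q) • (w q ⊗ₜ[k] w p) := by
    rw [comul_snd_sum Q hR]
    simp only [map_sum]
    refine Finset.sum_congr rfl fun p _ => ?_
    exact Finset.sum_congr rfl fun q _ => hMt _ _
  rw [← e1, e2]
  exact Finset.sum_congr rfl fun p _ => Finset.sum_congr rfl fun q _ => by
    rw [theta_dual Q hδ hR, theta_dual Q hδ hR]

lemma comul_thetaL (f : Module.Dual k H) {m : ℕ} {z v : Fin m → H}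
    {d : Fin m → Module.Dual k H}
    (hδ' : ∀ p q, d p (v q) = if p = q then (1 : k) else 0)
    (hR' : Q.R = ∑ p, z p ⊗ₜ[k] v p) :
    Coalgebra.comul (R := k) (qtThetaL k H Q f)
      = ∑ p, ∑ q, f (v p * v q) • (qtThetaL k H Q (d p) ⊗ₜ[k] qtThetaL k H Q (d q)) := by
  classical
  set M : H ⊗[k] (H ⊗[k] H) →ₗ[k] H ⊗[k] H :=
    (TensorProduct.rid k (H ⊗[k] H)).toLinearMap ∘ₗ TensorProduct.map LinearMap.id f
      ∘ₗ (TensorProduct.assoc k H H H).symm.toLinearMap with hM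
  have hMt : ∀ (x y t : H), M (x ⊗ₜ[k] (y ⊗ₜ[k] t)) = f t • (x ⊗ₜ[k] y) := by
    intros; simp [hM]
  have e1 : M ((TensorProduct.assoc k H H H)
        ((TensorProduct.map (Coalgebra.comul (R := k)) LinearMap.id) Q.R))
      = Coalgebra.comul (R := k) (qtThetaL k H Q f) := by
    rw [hR', thetaL_sum Q f hR']
    simp only [map_sum, map_smul]
    refine Finset.sum_congr rfl fun p _ => ?_
    rw [TensorProduct.map_tmul, LinearMap.id_apply, ← (ℛ k (z p)).eq,
      TensorProduct.sum_tmul]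
    simp only [map_sum]
    rw [Finset.smul_sum]
    refine Finset.sum_congr rfl fun t _ => ?_
    rw [TensorProduct.assoc_tmul, hMt]
  have e2 : M ((TensorProduct.assoc k H H H)
        ((TensorProduct.map (Coalgebra.comul (R := k)) LinearMap.id) Q.R))
      = ∑ p, ∑ q, f (v p * v q) • (z p ⊗ₜ[k] z q) := by
    rw [comul_fst_sum Q hR']
    simp only [map_sum]
    refine Finset.sum_congr rfl fun p _ => ?_
    exact Finset.sum_congr rfl fun q _ => hMt _ _ _
  rw [← e1, e2]
  exact Finset.sum_congr rfl fun p _ => Finset.sum_congr rfl fun q _ => by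
    rw [thetaL_dual Q hδ' hR', thetaL_dual Q hδ' hR']

lemma mapSS : TensorProduct.map (antipode (R := k)) (antipode (R := k)) Q.R = Q.R := by
  classical
  obtain ⟨n, u, w, c, hδ, hR⟩ := exists_dualRep (k := k) Q.R
  set S : H →ₗ[k] H := antipode (R := k) with hS
  set mu : H ⊗[k] H →ₗ[k] H := LinearMap.mul' k H with hmu
  have hC : ∑ p, Coalgebra.counit (R := k) (u p) • w p = (1 : H) := by
    rw [← theta_sum Q _ hR]; exact counit_theta Q
  have hD : ∑ p, Coalgebra.counit (R := k) (w p) • u p = (1 : H) := by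
    rw [← thetaL_sum Q _ hR]; exact counit_thetaL Q
  set A5 : H ⊗[k] (H ⊗[k] H) →ₗ[k] H ⊗[k] H :=
    TensorProduct.map (mu ∘ₗ TensorProduct.map S LinearMap.id) LinearMap.id
      ∘ₗ (TensorProduct.assoc k H H H).symm.toLinearMap with hA5
  have hA5t : ∀ x y t : H, A5 (x ⊗ₜ[k] (y ⊗ₜ[k] t)) = (S x * y) ⊗ₜ[k] t := by
    intros; simp [hA5, hmu]
  set A8 : H ⊗[k] (H ⊗[k] H) →ₗ[k] H ⊗[k] H :=
    TensorProduct.map LinearMap.id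
      (mu ∘ₗ TensorProduct.map LinearMap.id Q.Sinv ∘ₗ (TensorProduct.comm k H H).toLinearMap)
      with hA8
  have hA8t : ∀ x y t : H, A8 (x ⊗ₜ[k] (y ⊗ₜ[k] t)) = x ⊗ₜ[k] (t * Q.Sinv y) := by
    intros; simp [hA8, hmu]
  have hT : (TensorProduct.map S LinearMap.id Q.R) * Q.R = 1 := by
    have e1 : A5 ((TensorProduct.assoc k H H H)
        ((TensorProduct.map (Coalgebra.comul (R := k)) LinearMap.id) Q.R)) = 1 := by
      rw [hR]
      simp only [map_sum]
      have hterm : ∀ p : Fin n, A5 ((TensorProduct.assoc k H H H)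
          ((TensorProduct.map (Coalgebra.comul (R := k)) LinearMap.id) (u p ⊗ₜ[k] w p)))
          = Coalgebra.counit (R := k) (u p) • ((1 : H) ⊗ₜ[k] w p) := by
        intro p
        rw [TensorProduct.map_tmul, LinearMap.id_apply, ← (ℛ k (u p)).eq,
          TensorProduct.sum_tmul]
        simp only [map_sum]
        calc ∑ t ∈ (ℛ k (u p)).index, A5 ((TensorProduct.assoc k H H H)
              (((ℛ k (u p)).left t ⊗ₜ[k] (ℛ k (u p)).right t) ⊗ₜ[k] w p))
            = ∑ t ∈ (ℛ k (u p)).index,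
                (S ((ℛ k (u p)).left t) * (ℛ k (u p)).right t) ⊗ₜ[k] w p := by
              refine Finset.sum_congr rfl fun t _ => ?_
              rw [TensorProduct.assoc_tmul, hA5t]
          _ = (∑ t ∈ (ℛ k (u p)).index,
                S ((ℛ k (u p)).left t) * (ℛ k (u p)).right t) ⊗ₜ[k] w p :=
              (TensorProduct.sum_tmul _ _ _).symm
          _ = (Coalgebra.counit (R := k) (u p) • (1 : H)) ⊗ₜ[k] w p := by
              rw [hS, sum_antipode_mul_eq_smul (ℛ k (u p))]
          _ = Coalgebra.counit (R := k) (u p) • ((1 : H) ⊗ₜ[k] w p) := by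
              rw [TensorProduct.smul_tmul']
      rw [Finset.sum_congr rfl fun p _ => hterm p]
      calc ∑ p, Coalgebra.counit (R := k) (u p) • ((1 : H) ⊗ₜ[k] w p)
          = (1 : H) ⊗ₜ[k] ∑ p, Coalgebra.counit (R := k) (u p) • w p := by
            rw [TensorProduct.tmul_sum]
            exact Finset.sum_congr rfl fun p _ => (TensorProduct.tmul_smul _ _ _).symm
        _ = (1 : H) ⊗ₜ[k] (1 : H) := by rw [hC]
        _ = 1 := (Algebra.TensorProduct.one_def).symm
    have e2 : A5 ((TensorProduct.assoc k H H H)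
        ((TensorProduct.map (Coalgebra.comul (R := k)) LinearMap.id) Q.R))
        = (TensorProduct.map S LinearMap.id Q.R) * Q.R := by
      rw [comul_fst_sum Q hR]
      conv_rhs => rw [hR]
      simp only [map_sum]
      rw [Finset.sum_mul_sum]
      refine Finset.sum_congr rfl fun p _ => Finset.sum_congr rfl fun q _ => ?_
      rw [hA5t]
      simp [Algebra.TensorProduct.tmul_mul_tmul]
    rw [← e2, e1]
  have hU2 : Q.R * (TensorProduct.map LinearMap.id Q.Sinv Q.R) = 1 := by
    have e1 : A8 ((TensorProduct.map LinearMap.id (Coalgebra.comul (R := k))) Q.R) = 1 := by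
      rw [hR]
      simp only [map_sum]
      have hterm : ∀ p : Fin n, A8
          ((TensorProduct.map LinearMap.id (Coalgebra.comul (R := k))) (u p ⊗ₜ[k] w p))
          = Coalgebra.counit (R := k) (w p) • (u p ⊗ₜ[k] (1 : H)) := by
        intro p
        rw [TensorProduct.map_tmul, LinearMap.id_apply, ← (ℛ k (w p)).eq,
          TensorProduct.tmul_sum]
        simp only [map_sum]
        calc ∑ t ∈ (ℛ k (w p)).index, A8
              (u p ⊗ₜ[k] ((ℛ k (w p)).left t ⊗ₜ[k] (ℛ k (w p)).right t))
            = ∑ t ∈ (ℛ k (w p)).index,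
                u p ⊗ₜ[k] ((ℛ k (w p)).right t * Q.Sinv ((ℛ k (w p)).left t)) := by
              refine Finset.sum_congr rfl fun t _ => ?_
              rw [hA8t]
          _ = u p ⊗ₜ[k] (∑ t ∈ (ℛ k (w p)).index,
                (ℛ k (w p)).right t * Q.Sinv ((ℛ k (w p)).left t)) :=
              (TensorProduct.tmul_sum _ _ _).symm
          _ = u p ⊗ₜ[k] (Coalgebra.counit (R := k) (w p) • (1 : H)) := by
              rw [sum_mul_sinv Q.Sinv Q.Sinv_antipode Q.antipode_Sinv (ℛ k (w p))]
          _ = Coalgebra.counit (R := k) (w p) • (u p ⊗ₜ[k] (1 : H)) := by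
              rw [TensorProduct.tmul_smul]
      rw [Finset.sum_congr rfl fun p _ => hterm p]
      calc ∑ p, Coalgebra.counit (R := k) (w p) • (u p ⊗ₜ[k] (1 : H))
          = (∑ p, Coalgebra.counit (R := k) (w p) • u p) ⊗ₜ[k] (1 : H) := by
            rw [TensorProduct.sum_tmul]
            exact Finset.sum_congr rfl fun p _ => (TensorProduct.smul_tmul' _ _ _).symm
        _ = (1 : H) ⊗ₜ[k] (1 : H) := by rw [hD]
        _ = 1 := (Algebra.TensorProduct.one_def).symm
    have e2 : A8 ((TensorProduct.map LinearMap.id (Coalgebra.comul (R := k))) Q.R)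
        = Q.R * (TensorProduct.map LinearMap.id Q.Sinv Q.R) := by
      rw [comul_snd_sum Q hR]
      conv_rhs => rw [hR]
      simp only [map_sum]
      rw [Finset.sum_mul_sum]
      refine Finset.sum_congr rfl fun p _ => Finset.sum_congr rfl fun q _ => ?_
      rw [hA8t]
      simp [Algebra.TensorProduct.tmul_mul_tmul]
    rw [← e2, e1]
  have TU : TensorProduct.map S LinearMap.id Q.R
      = TensorProduct.map LinearMap.id Q.Sinv Q.R :=
    left_inv_eq_right_inv hT hU2
  have comp1 : TensorProduct.map (LinearMap.id : H →ₗ[k] H) S ∘ₗ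
        TensorProduct.map S (LinearMap.id : H →ₗ[k] H)
      = TensorProduct.map S S := by
    apply TensorProduct.ext'
    intro m n
    simp
  have comp2 : TensorProduct.map (LinearMap.id : H →ₗ[k] H) S ∘ₗ
        TensorProduct.map (LinearMap.id : H →ₗ[k] H) Q.Sinv
      = TensorProduct.map (LinearMap.id : H →ₗ[k] H) (S ∘ₗ Q.Sinv) := by
    apply TensorProduct.ext'
    intro m n
    simp
  have hSinv : S ∘ₗ Q.Sinv = LinearMap.id := LinearMap.ext Q.antipode_Sinv
  calc TensorProduct.map S S Q.R
      = (TensorProduct.map LinearMap.id S) (TensorProduct.map S LinearMap.id Q.R) := by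
        rw [← LinearMap.comp_apply, comp1]
    _ = (TensorProduct.map LinearMap.id S) (TensorProduct.map LinearMap.id Q.Sinv Q.R) := by
        rw [TU]
    _ = Q.R := by
        rw [← LinearMap.comp_apply, comp2, hSinv, TensorProduct.map_id, LinearMap.id_apply]

lemma antipode_theta (f : Module.Dual k H) :
    antipode (R := k) (qtTheta k H Q f) = qtTheta k H Q (f ∘ₗ Q.Sinv) := by
  classical
  obtain ⟨n, u, w, c, hδ, hR⟩ := exists_dualRep (k := k) Q.R
  have h5 : Q.R = ∑ p, (antipode (R := k) (u p)) ⊗ₜ[k] (antipode (R := k) (w p)) := by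
    have h := mapSS Q
    conv_lhs => rw [← h, hR]
    simp [map_sum]
  rw [theta_sum Q f hR, theta_sum Q (f ∘ₗ Q.Sinv) h5]
  simp [map_sum, map_smul, Q.Sinv_antipode]

lemma antipode_thetaL (f : Module.Dual k H) :
    antipode (R := k) (qtThetaL k H Q f) = qtThetaL k H Q (f ∘ₗ Q.Sinv) := by
  classical
  obtain ⟨n, u, w, c, hδ, hR⟩ := exists_dualRep (k := k) Q.R
  have h5 : Q.R = ∑ p, (antipode (R := k) (u p)) ⊗ₜ[k] (antipode (R := k) (w p)) := by
    have h := mapSS Q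
    conv_lhs => rw [← h, hR]
    simp [map_sum]
  rw [thetaL_sum Q f hR, thetaL_sum Q (f ∘ₗ Q.Sinv) h5]
  simp [map_sum, map_smul, Q.Sinv_antipode]

lemma theta_add (f g : Module.Dual k H) :
    qtTheta k H Q (f + g) = qtTheta k H Q f + qtTheta k H Q g := by
  obtain ⟨n, u, w, c, hδ, hR⟩ := exists_dualRep (k := k) Q.R
  simp [theta_sum Q _ hR, add_smul, Finset.sum_add_distrib]

lemma theta_smul (a : k) (f : Module.Dual k H) :
    qtTheta k H Q (a • f) = a • qtTheta k H Q f := by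
  obtain ⟨n, u, w, c, hδ, hR⟩ := exists_dualRep (k := k) Q.R
  simp [theta_sum Q _ hR, smul_smul, Finset.smul_sum]

lemma theta_zero : qtTheta k H Q (0 : Module.Dual k H) = 0 := by
  obtain ⟨n, u, w, c, hδ, hR⟩ := exists_dualRep (k := k) Q.R
  simp [theta_sum Q _ hR]

end QTLemmas

/- STATEMENT 6: `R_l` and `R_r` are finite-dimensional Hopf subalgebras of `H`, and
`p ↦ p(R¹)R²` is an isomorphism of Hopf algebras `(R_l)^{*cop} → R_r`.  The map `θ` below is
`f ↦ f(R¹)R²` defined on all of `H*`; the fact that it only depends on the restriction of `f`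
to `R_l` and surjects onto `R_r` expresses that it induces a bijection `(R_l)^* → R_r`;
multiplicativity for the convolution product, compatibility with units and counits, and the
(opposite) comultiplication compatibility express that it is an isomorphism of Hopf algebras
from `(R_l)^{*cop}` onto `R_r`. -/
theorem Rl_Rr_hopf_subalgebras_and_iso
    (k H : Type*) [Field k] [Ring H] [HopfAlgebra k H] (Q : QuasiTriangular k H) :
    -- `R_l` and `R_r` are finite-dimensional Hopf subalgebras
    IsHopfSubalgebra k H (Rl k H Q) ∧ IsHopfSubalgebra k H (Rr k H Q) ∧
    FiniteDimensional k ↥(Rl k H Q) ∧ FiniteDimensional k ↥(Rr k H Q) ∧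
    -- θ takes values in R_r and factors through restriction to R_l, bijectively onto R_r
    (∀ f : Module.Dual k H, qtTheta k H Q f ∈ Rr k H Q) ∧
    (∀ f g : Module.Dual k H, (∀ x ∈ Rl k H Q, f x = g x) → qtTheta k H Q f = qtTheta k H Q g) ∧
    (∀ f g : Module.Dual k H, qtTheta k H Q f = qtTheta k H Q g → ∀ x ∈ Rl k H Q, f x = g x) ∧
    (∀ y ∈ Rr k H Q, ∃ f : Module.Dual k H, qtTheta k H Q f = y) ∧
    -- θ is an algebra map for the convolution product (= multiplication of the dual)
    (∀ f g : Module.Dual k H,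
      qtTheta k H Q (qtConv k H f g) = qtTheta k H Q f * qtTheta k H Q g) ∧
    (qtTheta k H Q (Coalgebra.counit (R := k)) = 1) ∧
    -- θ is a coalgebra map onto the *opposite* coalgebra structure of the dual
    (∀ f : Module.Dual k H, Coalgebra.counit (R := k) (qtTheta k H Q f) = f 1) ∧
    (∀ f : Module.Dual k H, ∃ (n : ℕ) (g h : Fin n → Module.Dual k H),
      (∀ x ∈ Rl k H Q, ∀ y ∈ Rl k H Q, f (x * y) = ∑ i, h i x * g i y) ∧
      Coalgebra.comul (R := k) (qtTheta k H Q f)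
        = ∑ i, qtTheta k H Q (g i) ⊗ₜ[k] qtTheta k H Q (h i)) := by
  classical
  open TensorProduct Coalgebra HopfAlgebra in
  obtain ⟨n, u, w, c, hδ, hR⟩ := exists_dualRep (k := k) Q.R
  obtain ⟨m, v, z, d, hδ', hRc⟩ := exists_dualRep (k := k) ((TensorProduct.comm k H H) Q.R)
  have hR' : Q.R = ∑ p, z p ⊗ₜ[k] v p := by
    have h := congrArg (TensorProduct.comm k H H).symm hRc
    rw [LinearEquiv.symm_apply_apply] at h
    rw [h, map_sum]
    simp
  have genR : ∀ f, qtTheta k H Q f ∈ Rr k H Q := fun f => Submodule.subset_span ⟨f, rfl⟩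
  have genL : ∀ f, qtThetaL k H Q f ∈ Rl k H Q := fun f => Submodule.subset_span ⟨f, rfl⟩
  have hRl_le : Rl k H Q ≤ Submodule.span k (Set.range u) := by
    refine Submodule.span_le.mpr ?_
    rintro x ⟨f, rfl⟩
    rw [SetLike.mem_coe, thetaL_sum Q f hR]
    exact Submodule.sum_mem _ fun p _ =>
      Submodule.smul_mem _ _ (Submodule.subset_span ⟨p, rfl⟩)
  have hRr_le : Rr k H Q ≤ Submodule.span k (Set.range w) := by
    refine Submodule.span_le.mpr ?_
    rintro x ⟨f, rfl⟩
    rw [SetLike.mem_coe, theta_sum Q f hR]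
    exact Submodule.sum_mem _ fun p _ =>
      Submodule.smul_mem _ _ (Submodule.subset_span ⟨p, rfl⟩)
  have hdual : ∀ x ∈ Submodule.span k (Set.range u), ∑ p, c p x • u p = x := by
    intro x hx
    set ρ : H →ₗ[k] H := ∑ p, LinearMap.smulRight (c p) (u p) with hρ
    have hval : ∀ y : H, ρ y = ∑ p, c p y • u p := by
      intro y; simp [hρ, LinearMap.sum_apply]
    have hspan : Submodule.span k (Set.range u) ≤ LinearMap.ker (ρ - LinearMap.id) := by
      refine Submodule.span_le.mpr ?_
      rintro _ ⟨q, rfl⟩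
      simp only [SetLike.mem_coe, LinearMap.mem_ker, LinearMap.sub_apply,
        LinearMap.id_apply, sub_eq_zero, hval]
      simp [hδ]
    have h2 := hspan hx
    rw [LinearMap.mem_ker, LinearMap.sub_apply, sub_eq_zero, LinearMap.id_apply] at h2
    rw [← hval x]
    exact h2
  -- Hopf subalgebra: Rl
  have memRl_one : (1 : H) ∈ Rl k H Q := by rw [← counit_thetaL Q]; exact genL _
  have memRl_mul : ∀ x ∈ Rl k H Q, ∀ y ∈ Rl k H Q, x * y ∈ Rl k H Q := by
    have step1 : ∀ (g : Module.Dual k H) (y : H), y ∈ Rl k H Q →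
        qtThetaL k H Q g * y ∈ Rl k H Q := by
      intro g y hy
      have hle : Rl k H Q ≤ Submodule.comap (LinearMap.mulLeft k (qtThetaL k H Q g))
          (Rl k H Q) := by
        refine Submodule.span_le.mpr ?_
        rintro _ ⟨f, rfl⟩
        simp only [SetLike.mem_coe, Submodule.mem_comap, LinearMap.mulLeft_apply]
        rw [thetaL_mul Q]
        exact genL _
      exact hle hy
    intro x hx y hy
    have hle : Rl k H Q ≤ Submodule.comap (LinearMap.mulRight k y) (Rl k H Q) := by
      refine Submodule.span_le.mpr ?_
      rintro _ ⟨f, rfl⟩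
      simp only [SetLike.mem_coe, Submodule.mem_comap, LinearMap.mulRight_apply]
      exact step1 f y hy
    exact hle hx
  have memRl_comul : ∀ x ∈ Rl k H Q, Coalgebra.comul (R := k) x ∈
      LinearMap.range (TensorProduct.map (Rl k H Q).subtype (Rl k H Q).subtype) := by
    intro x hx
    have hle : Rl k H Q ≤ Submodule.comap (Coalgebra.comul (R := k))
        (LinearMap.range (TensorProduct.map (Rl k H Q).subtype (Rl k H Q).subtype)) := by
      refine Submodule.span_le.mpr ?_
      rintro _ ⟨f, rfl⟩
      simp only [SetLike.mem_coe, Submodule.mem_comap]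
      rw [comul_thetaL Q f hδ' hR']
      refine Submodule.sum_mem _ fun p _ => Submodule.sum_mem _ fun q _ =>
        Submodule.smul_mem _ _ ?_
      exact ⟨(⟨_, genL (d p)⟩ : Rl k H Q) ⊗ₜ[k] (⟨_, genL (d q)⟩ : Rl k H Q), by
        simp [TensorProduct.map_tmul]⟩
    exact hle hx
  have memRl_antipode : ∀ x ∈ Rl k H Q, HopfAlgebra.antipode (R := k) x ∈ Rl k H Q := by
    intro x hx
    have hle : Rl k H Q ≤ Submodule.comap (HopfAlgebra.antipode (R := k)) (Rl k H Q) := by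
      refine Submodule.span_le.mpr ?_
      rintro _ ⟨f, rfl⟩
      simp only [SetLike.mem_coe, Submodule.mem_comap]
      rw [antipode_thetaL Q]
      exact genL _
    exact hle hx
  -- Hopf subalgebra: Rr
  have memRr_one : (1 : H) ∈ Rr k H Q := by rw [← counit_theta Q]; exact genR _
  have memRr_mul : ∀ x ∈ Rr k H Q, ∀ y ∈ Rr k H Q, x * y ∈ Rr k H Q := by
    have step1 : ∀ (g : Module.Dual k H) (y : H), y ∈ Rr k H Q →
        qtTheta k H Q g * y ∈ Rr k H Q := by
      intro g y hy
      have hle : Rr k H Q ≤ Submodule.comap (LinearMap.mulLeft k (qtTheta k H Q g))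
          (Rr k H Q) := by
        refine Submodule.span_le.mpr ?_
        rintro _ ⟨f, rfl⟩
        simp only [SetLike.mem_coe, Submodule.mem_comap, LinearMap.mulLeft_apply]
        rw [← theta_mul Q]
        exact genR _
      exact hle hy
    intro x hx y hy
    have hle : Rr k H Q ≤ Submodule.comap (LinearMap.mulRight k y) (Rr k H Q) := by
      refine Submodule.span_le.mpr ?_
      rintro _ ⟨f, rfl⟩
      simp only [SetLike.mem_coe, Submodule.mem_comap, LinearMap.mulRight_apply]
      exact step1 f y hy
    exact hle hx
  have memRr_comul : ∀ x ∈ Rr k H Q, Coalgebra.comul (R := k) x ∈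
      LinearMap.range (TensorProduct.map (Rr k H Q).subtype (Rr k H Q).subtype) := by
    intro x hx
    have hle : Rr k H Q ≤ Submodule.comap (Coalgebra.comul (R := k))
        (LinearMap.range (TensorProduct.map (Rr k H Q).subtype (Rr k H Q).subtype)) := by
      refine Submodule.span_le.mpr ?_
      rintro _ ⟨f, rfl⟩
      simp only [SetLike.mem_coe, Submodule.mem_comap]
      rw [comul_theta Q f hδ hR]
      refine Submodule.sum_mem _ fun p _ => Submodule.sum_mem _ fun q _ =>
        Submodule.smul_mem _ _ ?_
      exact ⟨(⟨_, genR (c q)⟩ : Rr k H Q) ⊗ₜ[k] (⟨_, genR (c p)⟩ : Rr k H Q), by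
        simp [TensorProduct.map_tmul]⟩
    exact hle hx
  have memRr_antipode : ∀ x ∈ Rr k H Q, HopfAlgebra.antipode (R := k) x ∈ Rr k H Q := by
    intro x hx
    have hle : Rr k H Q ≤ Submodule.comap (HopfAlgebra.antipode (R := k)) (Rr k H Q) := by
      refine Submodule.span_le.mpr ?_
      rintro _ ⟨f, rfl⟩
      simp only [SetLike.mem_coe, Submodule.mem_comap]
      rw [antipode_theta Q]
      exact genR _
    exact hle hx
  -- finite dimensionality
  haveI fin1 : FiniteDimensional k (Submodule.span k (Set.range u)) :=
    FiniteDimensional.span_of_finite k (Set.finite_range u)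
  haveI fin2 : FiniteDimensional k (Submodule.span k (Set.range w)) :=
    FiniteDimensional.span_of_finite k (Set.finite_range w)
  have fdRl : FiniteDimensional k ↥(Rl k H Q) := Submodule.finiteDimensional_of_le hRl_le
  have fdRr : FiniteDimensional k ↥(Rr k H Q) := Submodule.finiteDimensional_of_le hRr_le
  refine ⟨⟨memRl_one, memRl_mul, memRl_comul, memRl_antipode⟩,
    ⟨memRr_one, memRr_mul, memRr_comul, memRr_antipode⟩, fdRl, fdRr, genR, ?_, ?_, ?_,
    theta_mul Q, counit_theta Q, ?_, ?_⟩
  · -- θ only depends on the restriction to Rl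
    intro f g hfg
    rw [theta_sum Q f hR', theta_sum Q g hR']
    refine Finset.sum_congr rfl fun p _ => ?_
    rw [hfg (z p) (by rw [← thetaL_dual Q hδ' hR' p]; exact genL _)]
  · -- θ is injective on restrictions to Rl
    intro f g hfg x hx
    have hle : Rl k H Q ≤ LinearMap.ker (f - g) := by
      refine Submodule.span_le.mpr ?_
      rintro _ ⟨h', rfl⟩
      simp only [SetLike.mem_coe, LinearMap.mem_ker, LinearMap.sub_apply, sub_eq_zero]
      rw [pairing Q f h', pairing Q g h', hfg]
    have h2 := hle hx
    rw [LinearMap.mem_ker, LinearMap.sub_apply, sub_eq_zero] at h2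
    exact h2
  · -- θ is surjective onto Rr
    intro y hy
    refine Submodule.span_induction ?_ ?_ ?_ ?_ hy
    · rintro x ⟨f, rfl⟩; exact ⟨f, rfl⟩
    · exact ⟨0, theta_zero Q⟩
    · rintro x y' _ _ ⟨f, rfl⟩ ⟨g, rfl⟩; exact ⟨f + g, theta_add Q f g⟩
    · rintro a x _ ⟨f, rfl⟩; exact ⟨a • f, theta_smul Q a f⟩
  · -- counit compatibility
    intro f
    rw [← counit_thetaL Q]
    exact (pairing Q f _).symm
  · -- comultiplication compatibility
    intro f
    refine ⟨n * n,
      fun i => f (u (finProdFinEquiv.symm i).1 * u (finProdFinEquiv.symm i).2) •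
        c (finProdFinEquiv.symm i).2,
      fun i => c (finProdFinEquiv.symm i).1, ?_, ?_⟩
    · intro x hx y hy
      have hx' := hdual x (hRl_le hx)
      have hy' := hdual y (hRl_le hy)
      have key : f (x * y) = ∑ p, ∑ q, c p x * (f (u p * u q) * c q y) := by
        conv_lhs => rw [← hx', ← hy']
        rw [Finset.sum_mul_sum, map_sum]
        refine Finset.sum_congr rfl fun p _ => ?_
        rw [map_sum]
        refine Finset.sum_congr rfl fun q _ => ?_
        rw [smul_mul_smul_comm, map_smul, smul_eq_mul]
        ring
      rw [key]
      rw [← Equiv.sum_comp finProdFinEquiv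
        (fun i => c (finProdFinEquiv.symm i).1 x *
          ((f (u (finProdFinEquiv.symm i).1 * u (finProdFinEquiv.symm i).2) •
            c (finProdFinEquiv.symm i).2) y))]
      rw [Fintype.sum_prod_type]
      refine Finset.sum_congr rfl fun p _ => Finset.sum_congr rfl fun q _ => ?_
      simp only [Equiv.symm_apply_apply, LinearMap.smul_apply, smul_eq_mul]
    · rw [comul_theta Q f hδ hR]
      rw [← Equiv.sum_comp finProdFinEquiv
        (fun i => qtTheta k H Q (f (u (finProdFinEquiv.symm i).1 *
            u (finProdFinEquiv.symm i).2) • c (finProdFinEquiv.symm i).2) ⊗ₜ[k]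
          qtTheta k H Q (c (finProdFinEquiv.symm i).1))]
      rw [Fintype.sum_prod_type]
      refine Finset.sum_congr rfl fun p _ => Finset.sum_congr rfl fun q _ => ?_
      simp only [Equiv.symm_apply_apply]
      rw [theta_smul Q, TensorProduct.smul_tmul']
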